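/- ('Strong' propriety.) Let Ω be a finite set with at least two elements, 𝒜 a finite action set with at least two elements, and let 𝒫, 𝒬 be nonempty sets of probability measures on Ω whose closed convex hulls in ℝ^Ω are distinct. Then there exists a loss function ℓ : 𝒜 × Ω → ℝ such that the sets argmin_{a∈𝒜} sup_{P∈𝒫} E_P[ℓ(a,·)] = {a_𝒫} and argmin_{a∈𝒜} sup_{Q∈𝒬} E_Q[ℓ(a,·)] = {a_𝒬} are singletons, a_𝒫 ≠ a_𝒬, and sup_{P∈𝒫} E_P[ℓ(a_𝒫,·)] < sup_{P∈𝒫} E_P[ℓ(a_𝒬,·)]; that is, under a 𝒫 data model the IP score of the forecast 𝒫 is strictly smaller than that of the forecast 𝒬 for this loss. -/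
import Mathlib


/-- `P` is a probability measure on the finite set `Ω`. -/
def IsProb {Ω : Type*} [Fintype Ω] (P : Ω → ℝ) : Prop :=
  (∀ ω, 0 ≤ P ω) ∧ ∑ ω, P ω = 1

/-- Expectation of the gamble `Z` under `P`. -/
noncomputable def expct {Ω : Type*} [Fintype Ω] (P Z : Ω → ℝ) : ℝ :=
  ∑ ω, P ω * Z ω

/-- Upper expectation of the gamble `Z` over the set of probability measures `Ps`. -/
noncomputable def upExp {Ω : Type*} [Fintype Ω] (Ps : Set (Ω → ℝ)) (Z : Ω → ℝ) : ℝ :=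
  sSup ((fun P => expct P Z) '' Ps)

lemma expct_bound {Ω : Type*} [Fintype Ω] [Nonempty Ω] (P Z : Ω → ℝ) (hP : IsProb P) :
    expct P Z ≤ Finset.univ.sup' Finset.univ_nonempty Z := by
  set B := Finset.univ.sup' Finset.univ_nonempty Z with hB
  calc expct P Z ≤ ∑ ω, P ω * B := by
        apply Finset.sum_le_sum
        intro ω _
        exact mul_le_mul_of_nonneg_left (Finset.le_sup' Z (Finset.mem_univ ω)) (hP.1 ω)
    _ = B := by rw [← Finset.sum_mul, hP.2, one_mul]

lemma bddAbove_expct {Ω : Type*} [Fintype Ω] [Nonempty Ω] (Ps : Set (Ω → ℝ))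
    (hPs : ∀ P ∈ Ps, IsProb P) (Z : Ω → ℝ) :
    BddAbove ((fun P => expct P Z) '' Ps) := by
  refine ⟨Finset.univ.sup' Finset.univ_nonempty Z, ?_⟩
  rintro _ ⟨P, hP, rfl⟩
  exact expct_bound P Z (hPs P hP)

lemma le_upExp {Ω : Type*} [Fintype Ω] [Nonempty Ω] {Ps : Set (Ω → ℝ)}
    (hPs : ∀ P ∈ Ps, IsProb P) {P : Ω → ℝ} (hP : P ∈ Ps) (Z : Ω → ℝ) :
    expct P Z ≤ upExp Ps Z :=
  le_csSup (bddAbove_expct Ps hPs Z) ⟨P, hP, rfl⟩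

lemma upExp_le {Ω : Type*} [Fintype Ω] {Ps : Set (Ω → ℝ)} (hne : Ps.Nonempty)
    {Z : Ω → ℝ} {u : ℝ} (h : ∀ P ∈ Ps, expct P Z ≤ u) : upExp Ps Z ≤ u := by
  apply csSup_le (hne.image _)
  rintro _ ⟨P, hP, rfl⟩
  exact h P hP

lemma expct_const {Ω : Type*} [Fintype Ω] (P : Ω → ℝ) (hP : IsProb P) (c : ℝ) :
    expct P (fun _ => c) = c := by
  simp [expct, ← Finset.sum_mul, hP.2]

lemma upExp_const {Ω : Type*} [Fintype Ω] {Ps : Set (Ω → ℝ)} (hne : Ps.Nonempty)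
    (hPs : ∀ P ∈ Ps, IsProb P) (c : ℝ) : upExp Ps (fun _ => c) = c := by
  have : (fun P => expct P (fun _ => c)) '' Ps = {c} := by
    apply Set.eq_singleton_iff_nonempty_unique_mem.mpr
    refine ⟨hne.image _, ?_⟩
    rintro _ ⟨P, hP, rfl⟩
    exact expct_const P (hPs P hP) c
  rw [upExp, this, csSup_singleton]

/-- expectation of the gamble built from a linear functional recovers the functional. -/
lemma expct_eq_clm {Ω : Type*} [Fintype Ω] [DecidableEq Ω] (f : (Ω → ℝ) →L[ℝ] ℝ) (P : Ω → ℝ) :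
    expct P (fun ω => f (Pi.single ω 1)) = f P := by
  conv_rhs => rw [← Finset.univ_sum_single P]
  rw [map_sum]
  apply Finset.sum_congr rfl
  intro ω _
  have h1 : Pi.single ω (P ω) = P ω • (Pi.single ω (1 : ℝ) : Ω → ℝ) := by
    funext j
    simp [Pi.single_apply, Pi.smul_apply, smul_eq_mul, mul_ite, mul_one, mul_zero]
  rw [h1, map_smul, smul_eq_mul]

/-- Separation lemma. -/
lemma exists_gamble_lt {Ω : Type*} [Fintype Ω] [Nonempty Ω]
    (Ps Qs : Set (Ω → ℝ)) (hPsne : Ps.Nonempty) (hQsne : Qs.Nonempty)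
    (hPs : ∀ P ∈ Ps, IsProb P) (hQs : ∀ Q ∈ Qs, IsProb Q)
    {x : Ω → ℝ} (hx : x ∈ closure (convexHull ℝ Ps))
    (hx' : x ∉ closure (convexHull ℝ Qs)) :
    ∃ Z : Ω → ℝ, upExp Qs Z < upExp Ps Z := by
  classical
  obtain ⟨f, u, hf1, hf2⟩ := geometric_hahn_banach_closed_point
    ((convex_convexHull ℝ Qs).closure) isClosed_closure hx'
  set Z : Ω → ℝ := fun ω => f (Pi.single ω 1) with hZ
  refine ⟨Z, ?_⟩
  have hexp : ∀ P : Ω → ℝ, expct P Z = f P := fun P => expct_eq_clm f P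
  -- upExp Qs Z ≤ u
  have hQ : upExp Qs Z ≤ u := by
    apply upExp_le hQsne
    intro Q hQ
    rw [hexp]
    exact (hf1 Q (subset_closure (subset_convexHull ℝ Qs hQ))).le
  -- f x ≤ upExp Ps Z
  have hP : f x ≤ upExp Ps Z := by
    have hhalf : closure (convexHull ℝ Ps) ⊆ {y | f y ≤ upExp Ps Z} := by
      apply closure_minimal
      · apply convexHull_min
        · intro P hP
          have := le_upExp hPs hP Z
          rwa [hexp] at this
        · exact convex_halfSpace_le (f.toLinearMap.isLinear) _
      · exact (isClosed_Iic.preimage f.continuous)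
    exact hhalf hx
  linarith [hf2]

lemma argmin_singleton {𝒜 : Type*} (g : 𝒜 → ℝ) (a0 : 𝒜)
    (h : ∀ a, a ≠ a0 → g a0 < g a) : {a | ∀ a', g a ≤ g a'} = {a0} := by
  apply Set.eq_singleton_iff_unique_mem.mpr
  constructor
  · intro a'
    by_cases h' : a' = a0
    · rw [h']
    · exact (h a' h').le
  · intro a ha
    by_contra hne
    exact absurd (ha a0) (not_le.mpr (h a hne))

theorem strong_propriety
    {Ω 𝒜 : Type*} [Fintype Ω] [Fintype 𝒜]
    (hΩ : 2 ≤ Fintype.card Ω) (h𝒜 : 2 ≤ Fintype.card 𝒜)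
    (Ps Qs : Set (Ω → ℝ)) (hPsne : Ps.Nonempty) (hQsne : Qs.Nonempty)
    (hPs : ∀ P ∈ Ps, IsProb P) (hQs : ∀ Q ∈ Qs, IsProb Q)
    (hdist : closure (convexHull ℝ Ps) ≠ closure (convexHull ℝ Qs)) :
    ∃ (ℓ : 𝒜 → Ω → ℝ) (aP aQ : 𝒜),
      {a : 𝒜 | ∀ a' : 𝒜, upExp Ps (ℓ a) ≤ upExp Ps (ℓ a')} = {aP} ∧
      {a : 𝒜 | ∀ a' : 𝒜, upExp Qs (ℓ a) ≤ upExp Qs (ℓ a')} = {aQ} ∧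
      aP ≠ aQ ∧
      upExp Ps (ℓ aP) < upExp Ps (ℓ aQ) := by
  classical
  have : Nonempty Ω := Fintype.card_pos_iff.mp (by omega)
  -- two distinct actions
  have hnt : Nontrivial 𝒜 := Fintype.one_lt_card_iff_nontrivial.mp (by omega)
  obtain ⟨a0, a1, ha01⟩ := hnt.exists_pair_ne
  -- a gamble separating the two credal sets (in one of the two directions)
  have hsep : (∃ Z : Ω → ℝ, upExp Qs Z < upExp Ps Z) ∨
      (∃ Z : Ω → ℝ, upExp Ps Z < upExp Qs Z) := by
    by_cases hsub : closure (convexHull ℝ Ps) ⊆ closure (convexHull ℝ Qs)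
    · have hsub' : ¬ closure (convexHull ℝ Qs) ⊆ closure (convexHull ℝ Ps) := by
        intro h; exact hdist (le_antisymm hsub h)
      obtain ⟨x, hx, hx'⟩ := Set.not_subset.mp hsub'
      exact Or.inr ⟨_, (exists_gamble_lt Qs Ps hQsne hPsne hQs hPs hx hx').choose_spec⟩
    · obtain ⟨x, hx, hx'⟩ := Set.not_subset.mp hsub
      exact Or.inl ⟨_, (exists_gamble_lt Ps Qs hPsne hQsne hPs hQs hx hx').choose_spec⟩
  rcases hsep with ⟨Z, hZ⟩ | ⟨Z, hZ⟩
  · -- upExp Qs Z < upExp Ps Z : give a0 the constant c, a1 the gamble Z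
    set s := upExp Ps Z with hs
    set t := upExp Qs Z with ht
    set c := (s + t) / 2 with hc
    set M := s + 1 with hM
    set ℓ : 𝒜 → Ω → ℝ :=
      fun a => if a = a0 then (fun _ => c) else if a = a1 then Z else (fun _ => M) with hℓ
    have e0 : ℓ a0 = fun _ => c := by simp [hℓ]
    have e1 : ℓ a1 = Z := by simp [hℓ, Ne.symm ha01]
    have eM : ∀ a, a ≠ a0 → a ≠ a1 → ℓ a = fun _ => M := by
      intro a h1 h2; simp [hℓ, h1, h2]
    have hPc : upExp Ps (fun _ => c) = c := upExp_const hPsne hPs c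
    have hPM : upExp Ps (fun _ => M) = M := upExp_const hPsne hPs M
    have hQc : upExp Qs (fun _ => c) = c := upExp_const hQsne hQs c
    have hQM : upExp Qs (fun _ => M) = M := upExp_const hQsne hQs M
    refine ⟨ℓ, a0, a1, ?_, ?_, ha01, ?_⟩
    · apply argmin_singleton
      intro a ha
      rw [e0, hPc]
      by_cases h1 : a = a1
      · rw [h1, e1, ← hs]; linarith
      · rw [eM a ha h1, hPM]; linarith
    · apply argmin_singleton
      intro a ha
      rw [e1, ← ht]
      by_cases h1 : a = a0
      · rw [h1, e0, hQc]; linarith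
      · rw [eM a h1 ha, hQM]; linarith
    · rw [e0, e1, hPc, ← hs]; linarith
  · -- upExp Ps Z < upExp Qs Z : give a0 the gamble Z, a1 the constant c
    set s := upExp Ps Z with hs
    set t := upExp Qs Z with ht
    set c := (s + t) / 2 with hc
    set M := t + 1 with hM
    set ℓ : 𝒜 → Ω → ℝ :=
      fun a => if a = a0 then Z else if a = a1 then (fun _ => c) else (fun _ => M) with hℓ
    have e0 : ℓ a0 = Z := by simp [hℓ]
    have e1 : ℓ a1 = fun _ => c := by simp [hℓ, Ne.symm ha01]
    have eM : ∀ a, a ≠ a0 → a ≠ a1 → ℓ a = fun _ => M := by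
      intro a h1 h2; simp [hℓ, h1, h2]
    have hPc : upExp Ps (fun _ => c) = c := upExp_const hPsne hPs c
    have hPM : upExp Ps (fun _ => M) = M := upExp_const hPsne hPs M
    have hQc : upExp Qs (fun _ => c) = c := upExp_const hQsne hQs c
    have hQM : upExp Qs (fun _ => M) = M := upExp_const hQsne hQs M
    refine ⟨ℓ, a0, a1, ?_, ?_, ha01, ?_⟩
    · apply argmin_singleton
      intro a ha
      rw [e0, ← hs]
      by_cases h1 : a = a1
      · rw [h1, e1, hPc]; linarith
      · rw [eM a ha h1, hPM]; linarith
    · apply argmin_singleton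
      intro a ha
      rw [e1, hQc]
      by_cases h1 : a = a0
      · rw [h1, e0, ← ht]; linarith
      · rw [eM a h1 ha, hQM]; linarith
    · rw [e0, e1, hPc, ← hs]; linarith
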